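/- arXiv:1111.3975 — 8 statements merged into one kernel-verified Lean document; each statement's English description precedes it below -/
import Mathlib

section
/- The relation < is transitive: if a <_i b and b <_j c for some i, j ∈ I, then a < c (i.e., a <_k c for some k ∈ I). Moreover, in this situation i ≠ j, and if i <_I j then a <_i c, while if j <_I i then a <_j c. -/
open scoped Classical

variable {L ι : Type*}

/-- Δ_{a,b}: indices whose generator is below exactly one of `a`, `b`. -/
def Delta [SemilatticeSup L] (x : ι → L) (a b : L) : Set ι :=
  {j | (x j ≤ a ∧ ¬ x j ≤ b) ∨ (¬ x j ≤ a ∧ x j ≤ b)}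

/-- `a <_i b`: `i` is the minimum of `Δ_{a,b}` and `x i ≤ b`. -/
def LtAt [SemilatticeSup L] [LinearOrder ι] (x : ι → L) (a b : L) (i : ι) : Prop :=
  i ∈ Delta x a b ∧ (∀ j ∈ Delta x a b, i ≤ j) ∧ x i ≤ b

/-- The lectic strict order: `a < b` iff `a <_i b` for some `i`. -/
def LexLt [SemilatticeSup L] [LinearOrder ι] (x : ι → L) (a b : L) : Prop :=
  ∃ i, LtAt x a b i

/-- The (reflexive) lectic order. -/
def LexLe [SemilatticeSup L] [LinearOrder ι] (x : ι → L) (a b : L) : Prop :=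
  a = b ∨ LexLt x a b

/-- `{x i | i}` generates `L`: every element is a join of a nonempty subfamily. -/
def Generates [SemilatticeSup L] (x : ι → L) : Prop :=
  ∀ a : L, ∃ s : Finset ι, ∃ h : s.Nonempty, a = s.sup' h x

/-- `a ⊕ i = (⋁_{j <_I i, x j ≤ a} x j) ∨ x i`. -/
noncomputable def oplus [SemilatticeSup L] [LinearOrder ι] [Fintype ι]
    (x : ι → L) (a : L) (i : ι) : L :=
  (insert i (Finset.univ.filter fun j => j < i ∧ x j ≤ a)).sup'
    (Finset.insert_nonempty _ _) x


theorem lexLt_trans [SemilatticeSup L] [LinearOrder ι] [Fintype ι]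
    (x : ι → L) (hgen : Generates x) (a b c : L) (i j : ι)
    (hab : LtAt x a b i) (hbc : LtAt x b c j) :
    (∃ k, LtAt x a c k) ∧ i ≠ j ∧
      (i < j → LtAt x a c i) ∧ (j < i → LtAt x a c j) := by

  obtain ⟨hiD, himin, hib⟩ := hab
  obtain ⟨hjD, hjmin, hjc⟩ := hbc
  have hnia : ¬ x i ≤ a := by
    rcases hiD with ⟨h1, h2⟩ | ⟨h1, h2⟩
    · exact absurd hib h2
    · exact h1
  have hnjb : ¬ x j ≤ b := by
    rcases hjD with ⟨h1, h2⟩ | ⟨h1, h2⟩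
    · exact absurd hjc h2
    · exact h1
  have hne : i ≠ j := fun h => hnjb (h ▸ hib)
  have keyab : ∀ k, k < i → (x k ≤ a ↔ x k ≤ b) := by
    intro k hk
    by_contra h
    have hk' : k ∈ Delta x a b := by unfold Delta; simp only [Set.mem_setOf_eq]; tauto
    exact absurd (himin k hk') (not_le.mpr hk)
  have keybc : ∀ k, k < j → (x k ≤ b ↔ x k ≤ c) := by
    intro k hk
    by_contra h
    have hk' : k ∈ Delta x b c := by unfold Delta; simp only [Set.mem_setOf_eq]; tauto
    exact absurd (hjmin k hk') (not_le.mpr hk)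
  have H1 : i < j → LtAt x a c i := by
    intro hij
    have hic : x i ≤ c := (keybc i hij).mp hib
    refine ⟨Or.inr ⟨hnia, hic⟩, ?_, hic⟩
    intro k hk
    by_contra hlt
    push_neg at hlt
    have h1 := keyab k hlt
    have h2 := keybc k (hlt.trans hij)
    rcases hk with ⟨ha, hc⟩ | ⟨ha, hc⟩
    · exact hc (h2.mp (h1.mp ha))
    · exact ha (h1.mpr (h2.mpr hc))
  have H2 : j < i → LtAt x a c j := by
    intro hji
    have hnja : ¬ x j ≤ a := fun h => hnjb ((keyab j hji).mp h)
    refine ⟨Or.inr ⟨hnja, hjc⟩, ?_, hjc⟩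
    intro k hk
    by_contra hlt
    push_neg at hlt
    have h1 := keyab k (hlt.trans hji)
    have h2 := keybc k hlt
    rcases hk with ⟨ha, hc⟩ | ⟨ha, hc⟩
    · exact hc (h2.mp (h1.mp ha))
    · exact ha (h1.mpr (h2.mpr hc))
  refine ⟨?_, hne, H1, H2⟩
  rcases lt_or_gt_of_ne hne with h | h
  · exact ⟨i, H1 h⟩
  · exact ⟨j, H2 h⟩
end

section
/- The relation < is total on distinct elements: for all a, b ∈ L with a ≠ b, either a < b or b < a (and not both). -/
open scoped Classical

variable {L ι : Type*}

lemma delta_symm [SemilatticeSup L] (x : ι → L) (a b : L) :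
    Delta x a b = Delta x b a := by
  ext j; simp [Delta]; tauto

lemma delta_nonempty [SemilatticeSup L] (x : ι → L) (hgen : Generates x)
    {a b : L} (hne : a ≠ b) : ∃ j, j ∈ Delta x a b := by
  by_contra h
  push_neg at h
  have key : ∀ j, x j ≤ a ↔ x j ≤ b := by
    intro j
    have := h j
    simp [Delta] at this
    tauto
  apply hne
  apply le_antisymm
  · obtain ⟨s, hs, rfl⟩ := hgen a
    exact Finset.sup'_le _ _ fun j hj => (key j).mp (Finset.le_sup' x hj)
  · obtain ⟨s, hs, rfl⟩ := hgen b
    exact Finset.sup'_le _ _ fun j hj => (key j).mpr (Finset.le_sup' x hj)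

theorem lexLt_total [SemilatticeSup L] [LinearOrder ι] [Fintype ι]
    (x : ι → L) (hgen : Generates x) (a b : L) (hne : a ≠ b) :
    Xor' (LexLt x a b) (LexLt x b a) := by
  obtain ⟨j0, hj0⟩ := delta_nonempty x hgen hne
  set D : Finset ι := Finset.univ.filter fun j => j ∈ Delta x a b with hD
  have hmem : ∀ j, j ∈ D ↔ j ∈ Delta x a b := by
    intro j; simp [hD]
  have hDne : D.Nonempty := ⟨j0, (hmem j0).mpr hj0⟩
  set m := D.min' hDne with hm
  have hmD : m ∈ Delta x a b := (hmem m).mp (D.min'_mem hDne)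
  have hmin : ∀ j ∈ Delta x a b, m ≤ j := fun j hj => D.min'_le j ((hmem j).mpr hj)
  have hmin' : ∀ j ∈ Delta x b a, m ≤ j := by
    rw [delta_symm x b a]; exact hmin
  have hmD' : m ∈ Delta x b a := by rw [delta_symm x b a]; exact hmD
  -- uniqueness of the witness index: any LtAt index must equal m
  have huniq : ∀ i, LtAt x a b i → i = m := fun i ⟨hi, hle, _⟩ =>
    le_antisymm (hle m hmD) (hmin i hi)
  have huniq' : ∀ i, LtAt x b a i → i = m := fun i ⟨hi, hle, _⟩ =>
    le_antisymm (hle m hmD') (hmin' i hi)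
  rcases hmD with ⟨hxa, hxb⟩ | ⟨hxa, hxb⟩
  · -- x m ≤ a, ¬ x m ≤ b : b < a
    refine Or.inr ⟨⟨m, hmD', hmin', hxa⟩, ?_⟩
    rintro ⟨i, hi⟩
    exact hxb (huniq i hi ▸ hi.2.2)
  · refine Or.inl ⟨⟨m, Or.inr ⟨hxa, hxb⟩, hmin, hxb⟩, ?_⟩
    rintro ⟨i, hi⟩
    exact hxa (huniq' i hi ▸ hi.2.2)
end

section
/- The lectic order extends the semilattice order: if a ≤_L b then a ≤ b (where a ≤ b means a = b or a < b). Consequently, if a ≤_L c and b ≤_L c, then a ∨ b ≤ c. -/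
open scoped Classical

variable {L ι : Type*}

theorem lexLe_extends [SemilatticeSup L] [LinearOrder ι] [Fintype ι]
    (x : ι → L) (hgen : Generates x) :
    (∀ a b : L, a ≤ b → LexLe x a b) ∧
      (∀ a b c : L, a ≤ c → b ≤ c → LexLe x (a ⊔ b) c) := by
  have main : ∀ a b : L, a ≤ b → LexLe x a b := by
    intro a b hab
    by_cases heq : a = b
    · exact Or.inl heq
    · right
      -- Delta is nonempty
      have hne : ∃ j, j ∈ Delta x a b := by
        by_contra h
        push_neg at h
        apply heq
        obtain ⟨s, hs, hb⟩ := hgen b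
        have : b ≤ a := by
          rw [hb]
          apply Finset.sup'_le
          intro j hj
          have hjb : x j ≤ b := hb ▸ Finset.le_sup' x hj
          by_contra hja
          exact h j (Or.inr ⟨hja, hjb⟩)
        exact le_antisymm hab this
      classical
      set s : Finset ι := Finset.univ.filter (fun j => j ∈ Delta x a b) with hs
      have hsne : s.Nonempty := by
        obtain ⟨j, hj⟩ := hne
        exact ⟨j, by simp [hs, hj]⟩
      refine ⟨s.min' hsne, ?_, ?_, ?_⟩
      · have := s.min'_mem hsne
        simpa [hs] using this
      · intro j hj
        exact s.min'_le j (by simp [hs, hj])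
      · have hmem : s.min' hsne ∈ Delta x a b := by
          have := s.min'_mem hsne
          simpa [hs] using this
        rcases hmem with ⟨h1, _⟩ | ⟨_, h2⟩
        · exact h1.trans hab
        · exact h2
  exact ⟨main, fun a b c ha hb => main _ _ (sup_le ha hb)⟩
end

section
/- If a <_i b, a <_j c, and i <_I j, then c <_i b. -/
open scoped Classical

variable {L ι : Type*}

theorem helper_one [SemilatticeSup L] [LinearOrder ι] [Fintype ι]
    (x : ι → L) (hgen : Generates x) (a b c : L) (i j : ι)
    (hab : LtAt x a b i) (hac : LtAt x a c j) (hij : i < j) :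
    LtAt x c b i := by
  obtain ⟨hiD, hiMin, hib⟩ := hab
  obtain ⟨hjD, hjMin, hjc⟩ := hac
  -- for k < j, x k ≤ a ↔ x k ≤ c
  have key : ∀ k, k < j → (x k ≤ a ↔ x k ≤ c) := by
    intro k hk
    by_contra h
    have hkD : k ∈ Delta x a c := by
      simp only [Delta, Set.mem_setOf_eq]
      tauto
    exact absurd (hjMin k hkD) (not_le.2 hk)
  have hia : ¬ x i ≤ a := by
    rcases hiD with ⟨h1, h2⟩ | ⟨h1, h2⟩
    · exact absurd hib h2
    · exact h1
  have hic : ¬ x i ≤ c := fun h => hia ((key i hij).2 h)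
  refine ⟨Or.inr ⟨hic, hib⟩, ?_, hib⟩
  intro k hkD
  by_contra h
  push_neg at h
  have hkj : k < j := h.trans hij
  have : k ∈ Delta x a b := by
    rcases hkD with ⟨h1, h2⟩ | ⟨h1, h2⟩
    · exact Or.inl ⟨(key k hkj).2 h1, h2⟩
    · exact Or.inr ⟨fun ha => h1 ((key k hkj).1 ha), h2⟩
  exact absurd (hiMin k this) (not_le.2 h)
end

section
/- If x_i ≰_L a, then a < a ⊕ i, where a ⊕ i := (⋁_{j <_I i, x_j ≤_L a} x_j) ∨ x_i. -/
open scoped Classical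

variable {L ι : Type*}

theorem lt_oplus [SemilatticeSup L] [LinearOrder ι] [Fintype ι]
    (x : ι → L) (hgen : Generates x) (a : L) (i : ι) (hi : ¬ x i ≤ a) :
    LexLt x a (oplus x a i) := by
  set b := oplus x a i with hb
  have hxib : x i ≤ b := Finset.le_sup' x (Finset.mem_insert_self _ _)
  have hiD : i ∈ Delta x a b := Or.inr ⟨hi, hxib⟩
  let S : Finset ι := Finset.univ.filter (fun j => j ∈ Delta x a b)
  have hiS : i ∈ S := by simp [S, hiD]
  have hS : S.Nonempty := ⟨i, hiS⟩
  set m := S.min' hS with hm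
  have hmD : m ∈ Delta x a b := by
    have := S.min'_mem hS
    simpa [S] using this
  have hmin : ∀ j ∈ Delta x a b, m ≤ j := fun j hj =>
    S.min'_le j (by simp [S, hj])
  have hmi : m ≤ i := hmin i hiD
  refine ⟨m, hmD, hmin, ?_⟩
  rcases hmD with ⟨hma, hmb⟩ | ⟨_, hmb⟩
  · exfalso
    have hne : m ≠ i := fun h => hi (h ▸ hma)
    exact hmb (Finset.le_sup' x (by
      simp [oplus, Finset.mem_insert, lt_of_le_of_ne hmi hne, hma]))
  · exact hmb
end

section
/- If a <_i b, then a ⊕ i ≤ b (in the lectic order), where a ⊕ i := (⋁_{j <_I i, x_j ≤_L a} x_j) ∨ x_i. -/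
open scoped Classical

variable {L ι : Type*}

theorem oplus_le [SemilatticeSup L] [LinearOrder ι] [Fintype ι]
    (x : ι → L) (hgen : Generates x) (a b : L) (i : ι)
    (hab : LtAt x a b i) :
    LexLe x (oplus x a i) b := by
  obtain ⟨hiΔ, hmin, hxib⟩ := hab
  set c := oplus x a i with hc
  have hcb : c ≤ b := by
    apply Finset.sup'_le
    intro j hj
    rcases Finset.mem_insert.mp hj with rfl | hj
    · exact hxib
    · obtain ⟨hji, hja⟩ := (Finset.mem_filter.mp hj).2
      by_contra hjb
      exact absurd (hmin j (Or.inl ⟨hja, hjb⟩)) (not_le.mpr hji)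
  by_cases hceq : c = b
  · exact Or.inl hceq
  · right
    have hΔne : (Delta x c b).Nonempty := by
      rw [Set.nonempty_iff_ne_empty]
      intro hempty
      apply hceq
      refine le_antisymm hcb ?_
      obtain ⟨s, hs, hbs⟩ := hgen b
      rw [hbs]
      apply Finset.sup'_le
      intro j hj
      have hjb : x j ≤ b := hbs ▸ Finset.le_sup' x hj
      have hnot : j ∉ Delta x c b := by rw [hempty]; exact Set.notMem_empty j
      simp only [Delta, Set.mem_setOf_eq] at hnot
      tauto
    have hDne : (Finset.univ.filter (fun j => j ∈ Delta x c b)).Nonempty := by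
      obtain ⟨j, hj⟩ := hΔne
      exact ⟨j, by simp [hj]⟩
    set D := Finset.univ.filter (fun j => j ∈ Delta x c b) with hD
    have hmem : D.min' hDne ∈ Delta x c b := by
      have := D.min'_mem hDne
      simp only [hD, Finset.mem_filter] at this
      exact this.2
    refine ⟨D.min' hDne, hmem, ?_, ?_⟩
    · intro j hj
      exact D.min'_le j (by simp [hD, hj])
    · rcases hmem with ⟨h1, h2⟩ | ⟨h1, h2⟩
      · exact absurd (h1.trans hcb) h2
      · exact h2
end

section
/- If a <_i b for some b ∈ L, then a <_i a ⊕ i. -/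
open scoped Classical

variable {L ι : Type*}

theorem ltAt_oplus [SemilatticeSup L] [LinearOrder ι] [Fintype ι]
    (x : ι → L) (hgen : Generates x) (a b : L) (i : ι)
    (hab : LtAt x a b i) :
    LtAt x a (oplus x a i) i := by
  obtain ⟨hiΔ, hmin, hib⟩ := hab
  have hxia : ¬ x i ≤ a := by
    rcases hiΔ with ⟨_, h⟩ | ⟨h, _⟩
    · exact absurd hib h
    · exact h
  have hle : oplus x a i ≤ b := by
    apply Finset.sup'_le
    intro j hj
    rcases Finset.mem_insert.1 hj with rfl | hj
    · exact hib
    · simp only [Finset.mem_filter, Finset.mem_univ, true_and] at hj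
      obtain ⟨hji, hja⟩ := hj
      by_contra hjb
      exact absurd (hmin j (Or.inl ⟨hja, hjb⟩)) (not_le.2 hji)
  have hxi_op : x i ≤ oplus x a i := Finset.le_sup' x (Finset.mem_insert_self _ _)
  refine ⟨Or.inr ⟨hxia, hxi_op⟩, ?_, hxi_op⟩
  intro j hj
  by_contra hij
  push_neg at hij
  rcases hj with ⟨hja, hjop⟩ | ⟨hja, hjop⟩
  · exact hjop (Finset.le_sup' x (Finset.mem_insert_of_mem (by simp [hij, hja])))
  · exact absurd (hmin j (Or.inr ⟨hja, hjop.trans hle⟩)) (not_le.2 hij)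
end

section
/- Given two elements a, b of L with a < b in the lectic order, there is no element strictly between a and a ⊕ i when i = min Δ_{a,b} satisfies a <_i b and a ⊕ i ≤ b; formally, if a <_i b then a ⊕ i is ≤ every c with a < c ≤ b and a <_i c. -/
open scoped Classical

variable {L ι : Type*}

theorem oplus_le_of_between [SemilatticeSup L] [LinearOrder ι] [Fintype ι]
    (x : ι → L) (hgen : Generates x) (a b : L) (i : ι)
    (hab : LtAt x a b i) :
    ∀ c : L, LexLt x a c → LexLe x c b → LtAt x a c i →
      LexLe x (oplus x a i) c := by
  intro c _ _ hac
  obtain ⟨hiΔ, hmin, hic⟩ := hac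
  -- lattice inequality: oplus x a i ≤ c
  have hdc : oplus x a i ≤ c := by
    apply Finset.sup'_le
    intro j hj
    rcases Finset.mem_insert.mp hj with rfl | hj
    · exact hic
    · obtain ⟨hji, hja⟩ := (Finset.mem_filter.mp hj).2
      by_contra hjc
      exact absurd (hmin j (Or.inl ⟨hja, hjc⟩)) (not_le.mpr hji)
  set d := oplus x a i with hd
  by_cases hdceq : d = c
  · exact Or.inl hdceq
  · right
    -- Δ_{d,c} is nonempty
    have hne : (Finset.univ.filter fun j => j ∈ Delta x d c).Nonempty := by
      by_contra hemp
      apply hdceq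
      obtain ⟨s, hs, hc⟩ := hgen c
      have hcd : c ≤ d := by
        rw [hc]
        apply Finset.sup'_le
        intro j hjs
        have hjc : x j ≤ c := hc ▸ Finset.le_sup' x hjs
        by_contra hjd
        exact hemp ⟨j, Finset.mem_filter.mpr ⟨Finset.mem_univ j,
          Or.inr ⟨hjd, hjc⟩⟩⟩
      exact le_antisymm hdc hcd
    set k := (Finset.univ.filter fun j => j ∈ Delta x d c).min' hne with hk
    have hkΔ : k ∈ Delta x d c :=
      (Finset.mem_filter.mp ((Finset.univ.filter
        fun j => j ∈ Delta x d c).min'_mem hne)).2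
    have hkc : x k ≤ c := by
      rcases hkΔ with ⟨hkd, hkc⟩ | ⟨_, hkc⟩
      · exact absurd (hkd.trans hdc) hkc
      · exact hkc
    refine ⟨k, hkΔ, fun j hj => ?_, hkc⟩
    exact Finset.min'_le _ j (Finset.mem_filter.mpr ⟨Finset.mem_univ j, hj⟩)
end
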